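/- Let M ∈ L^∞(0,T; ℝ^{ℓ'×d}) and 𝒦 ∈ L²((0,T)²; ℝ^{ℓ'×d}). Suppose that for every x ∈ L²(0,T; ℝ^d), M(t)x(t) + ∫₀ᵀ 𝒦(t,θ)x(θ) dθ = 0 for a.e. t ∈ (0,T). Then M(t) = 0 for a.e. t ∈ (0,T). -/

import Mathlib

open MeasureTheory Set Matrix
open scoped ENNReal

open Filter
open scoped Topology

attribute [local instance] Matrix.frobeniusNormedAddCommGroup


lemma aux_le_one_add_sq (a : ℝ≥0∞) : a ≤ 1 + a ^ 2 := by
  rcases le_total a 1 with h | h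
  · exact h.trans le_self_add
  · calc a = a * 1 := (mul_one a).symm
      _ ≤ a * a := by gcongr
      _ = a ^ 2 := (sq a).symm
      _ ≤ 1 + a ^ 2 := le_add_self

lemma aux_entry_le {m n : ℕ} (A : Matrix (Fin m) (Fin n) ℝ) (i : Fin m) (j : Fin n) :
    ‖A i j‖ ≤ ‖A‖ := by
  rw [Matrix.frobenius_norm_def]
  have h1 : ‖A i j‖ ^ (2:ℝ) ≤ ∑ i', ∑ j', ‖A i' j'‖ ^ (2:ℝ) := by
    have h0 : ‖A i j‖ ^ (2:ℝ) ≤ ∑ j', ‖A i j'‖ ^ (2:ℝ) :=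
      Finset.single_le_sum (f := fun j' => ‖A i j'‖ ^ (2:ℝ))
        (fun _ _ => Real.rpow_nonneg (norm_nonneg _) _) (Finset.mem_univ j)
    exact h0.trans (Finset.single_le_sum (f := fun i' => ∑ j', ‖A i' j'‖ ^ (2:ℝ))
      (fun _ _ => Finset.sum_nonneg fun _ _ => Real.rpow_nonneg (norm_nonneg _) _)
      (Finset.mem_univ i))
  calc ‖A i j‖ = (‖A i j‖ ^ (2:ℝ)) ^ (1/2:ℝ) := by
        rw [← Real.rpow_mul (norm_nonneg _)]; norm_num
    _ ≤ (∑ i', ∑ j', ‖A i' j'‖ ^ (2:ℝ)) ^ (1/2:ℝ) :=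
        Real.rpow_le_rpow (Real.rpow_nonneg (norm_nonneg _) _) h1 (by norm_num)

/-- If the multiplication operator by `M ∈ L^∞(0,T;ℝ^{ℓ'×d})` plus the integral operator
with kernel `𝒦 ∈ L²((0,T)²;ℝ^{ℓ'×d})` vanishes identically on `L²(0,T;ℝ^d)`, then
`M(t) = 0` for a.e. `t ∈ (0,T)`. -/
theorem stmt11 {d ℓ' : ℕ} (T : ℝ) (hT : 0 < T)
    (M : ℝ → Matrix (Fin ℓ') (Fin d) ℝ)
    (𝒦 : ℝ → ℝ → Matrix (Fin ℓ') (Fin d) ℝ)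
    (hMmeas : Measurable fun t (i : Fin ℓ') (j : Fin d) => M t i j)
    (hMbdd : ∃ C : ℝ, ∀ᵐ t ∂(volume.restrict (Ioo 0 T)), ‖M t‖ ≤ C)
    (h𝒦meas : Measurable fun (p : ℝ × ℝ) (i : Fin ℓ') (j : Fin d) => 𝒦 p.1 p.2 i j)
    (h𝒦L2 : ∫⁻ p in (Ioo 0 T) ×ˢ (Ioo 0 T), (‖𝒦 p.1 p.2‖₊ : ℝ≥0∞) ^ 2 < ⊤)
    (hzero : ∀ x : ℝ → Fin d → ℝ, Measurable x →
      Integrable (fun t => x t ⬝ᵥ x t) (volume.restrict (Ioo 0 T)) →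
      ∀ᵐ t ∂(volume.restrict (Ioo 0 T)),
        (M t).mulVec (x t) + (∫ θ in Ioo 0 T, (𝒦 t θ).mulVec (x θ)) = 0) :
    ∀ᵐ t ∂(volume.restrict (Ioo 0 T)), M t = 0 := by
  haveI hfin : IsFiniteMeasure (volume.restrict (Ioo (0:ℝ) T)) := by
    constructor
    rw [Measure.restrict_apply_univ, Real.volume_Ioo]
    exact ENNReal.ofReal_lt_top
  -- entry measurability
  have hentry : ∀ (i : Fin ℓ') (j : Fin d), Measurable fun p : ℝ × ℝ => 𝒦 p.1 p.2 i j :=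
    fun i j => (measurable_pi_apply j).comp ((measurable_pi_apply i).comp h𝒦meas)
  -- measurability of the frobenius norm
  have hnorm : Measurable fun p : ℝ × ℝ => ‖𝒦 p.1 p.2‖ := by
    simp only [Matrix.frobenius_norm_def]
    have hm : Measurable fun x : ℝ => x ^ (2:ℝ) :=
      (Real.continuous_rpow_const (by norm_num)).measurable
    have hm' : Measurable fun x : ℝ => x ^ (1/2:ℝ) :=
      (Real.continuous_rpow_const (by norm_num)).measurable
    exact hm'.comp (Finset.measurable_sum _ fun i _ => Finset.measurable_sum _ fun j _ =>
      hm.comp (hentry i j).norm)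
  have hnorm2 : Measurable fun p : ℝ × ℝ => (‖𝒦 p.1 p.2‖₊ : ℝ≥0∞) ^ 2 := by
    have : (fun p : ℝ × ℝ => ((‖𝒦 p.1 p.2‖₊ : ℝ≥0∞)) ^ 2)
        = fun p : ℝ × ℝ => (ENNReal.ofReal ‖𝒦 p.1 p.2‖) ^ 2 := by
      funext p; rw [ofReal_norm, enorm_eq_nnnorm]
    rw [this]
    exact (ENNReal.measurable_ofReal.comp hnorm).pow_const _
  -- Fubini: a.e. slice of the kernel is square integrable
  have hker : ∀ᵐ t ∂(volume.restrict (Ioo 0 T)),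
      ∫⁻ θ in Ioo 0 T, (‖𝒦 t θ‖₊ : ℝ≥0∞) ^ 2 < ⊤ := by
    apply ae_lt_top
    · exact Measurable.lintegral_prod_right' (f := fun p : ℝ × ℝ => (‖𝒦 p.1 p.2‖₊ : ℝ≥0∞) ^ 2) hnorm2
    · rw [← MeasureTheory.lintegral_prod _ hnorm2.aemeasurable, Measure.prod_restrict,
        ← MeasureTheory.Measure.volume_eq_prod]
      exact h𝒦L2.ne
  -- apply hzero to constant and indicator test functions
  have hfull : ∀ j : Fin d, ∀ᵐ t ∂(volume.restrict (Ioo 0 T)),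
      M t *ᵥ (Pi.single j 1) + ∫ θ in Ioo 0 T, 𝒦 t θ *ᵥ (Pi.single j 1) = 0 :=
    fun j => hzero (fun _ => Pi.single j 1) measurable_const (integrable_const _)
  have hind : ∀ (S' : Set ℝ), MeasurableSet S' → ∀ j : Fin d,
      ∀ᵐ t ∂(volume.restrict (Ioo 0 T)),
        M t *ᵥ (S'.indicator (fun _ => (Pi.single j 1 : Fin d → ℝ)) t)
          + ∫ θ in Ioo 0 T, 𝒦 t θ *ᵥ (S'.indicator (fun _ => (Pi.single j 1 : Fin d → ℝ)) θ) = 0 := by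
    intro S' hS' j
    apply hzero _ (measurable_const.indicator hS')
    have hdot : (fun t => (S'.indicator (fun _ => (Pi.single j 1 : Fin d → ℝ)) t)
        ⬝ᵥ (S'.indicator (fun _ => (Pi.single j 1 : Fin d → ℝ)) t))
        = S'.indicator fun _ => ((Pi.single j 1 : Fin d → ℝ) ⬝ᵥ Pi.single j 1) := by
      funext u
      by_cases h : u ∈ S' <;>
        simp [Set.indicator_of_mem, Set.indicator_of_notMem, h]
    rw [hdot]
    exact (integrable_const _).indicator hS'
  have Hfull := ae_all_iff.2 hfull
  have HL := ae_all_iff.2 fun j : Fin d => ae_all_iff.2 fun s : ℚ =>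
    hind (Ioo 0 (s:ℝ)) measurableSet_Ioo j
  have HR := ae_all_iff.2 fun j : Fin d => ae_all_iff.2 fun s : ℚ =>
    hind (Ioo (s:ℝ) T) measurableSet_Ioo j
  filter_upwards [Hfull, HL, HR, hker, ae_restrict_mem measurableSet_Ioo]
    with t h1 h2 h3 hk2 ht
  -- slice measurability and integrability
  have hentry_t : ∀ (i : Fin ℓ') (j : Fin d), Measurable fun θ => 𝒦 t θ i j :=
    fun i j => (hentry i j).comp (measurable_const.prodMk measurable_id)
  have hv : ∀ j : Fin d, IntegrableOn (fun θ => 𝒦 t θ *ᵥ (Pi.single j 1)) (Ioo 0 T) volume := by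
    intro j
    have hvf : (fun θ => 𝒦 t θ *ᵥ (Pi.single j 1 : Fin d → ℝ)) = fun θ (i : Fin ℓ') => 𝒦 t θ i j := by
      funext θ; simp [Matrix.mulVec_single]; rfl
    rw [hvf]
    refine ⟨(measurable_pi_lambda _ fun i => hentry_t i j).aestronglyMeasurable, ?_⟩
    have hfin2 : ∫⁻ θ in Ioo 0 T, (1 + (‖𝒦 t θ‖₊ : ℝ≥0∞) ^ 2) < ⊤ := by
      rw [lintegral_add_left measurable_const]
      refine ENNReal.add_lt_top.2 ⟨?_, hk2⟩
      simp [Real.volume_Ioo]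
    refine lt_of_le_of_lt (lintegral_mono fun θ => ?_) hfin2
    refine le_trans ?_ (aux_le_one_add_sq _)
    refine ENNReal.coe_le_coe.2 (pi_nnnorm_le_iff.2 fun i => ?_)
    rw [← NNReal.coe_le_coe, coe_nnnorm, coe_nnnorm]
    exact aux_entry_le (𝒦 t θ) i j
  -- key: each column of M t vanishes
  have key : ∀ j : Fin d, M t *ᵥ (Pi.single j 1 : Fin d → ℝ) = 0 := by
    intro j
    -- interval identities from the indicator test functions
    have hIL : ∀ s : ℚ, 0 < (s:ℝ) → (s:ℝ) < t →
        ∫ θ in Ioo (0:ℝ) (s:ℝ), 𝒦 t θ *ᵥ (Pi.single j 1) = 0 := by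
      intro s hs0 hst
      have heq := h2 j s
      have hnt : t ∉ Ioo (0:ℝ) (s:ℝ) := fun hmem => absurd hmem.2 (not_lt.2 hst.le)
      rw [Set.indicator_of_notMem hnt, Matrix.mulVec_zero] at heq
      have hfun : (fun θ => 𝒦 t θ *ᵥ ((Ioo (0:ℝ) (s:ℝ)).indicator
            (fun _ => (Pi.single j 1 : Fin d → ℝ)) θ))
          = (Ioo (0:ℝ) (s:ℝ)).indicator (fun θ => 𝒦 t θ *ᵥ (Pi.single j 1)) := by
        funext θ
        by_cases hθ : θ ∈ Ioo (0:ℝ) (s:ℝ) <;>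
          simp [Set.indicator_of_mem, Set.indicator_of_notMem, hθ, Matrix.mulVec_zero]
      rw [hfun, setIntegral_indicator measurableSet_Ioo, Set.Ioo_inter_Ioo, zero_add] at heq
      simpa [inf_eq_right.mpr (hst.trans ht.2).le] using heq
    have hIR : ∀ s : ℚ, t < (s:ℝ) → (s:ℝ) < T →
        ∫ θ in Ioo ((s:ℝ)) T, 𝒦 t θ *ᵥ (Pi.single j 1) = 0 := by
      intro s hts hsT
      have heq := h3 j s
      have hnt : t ∉ Ioo ((s:ℝ)) T := fun hmem => absurd hmem.1 (not_lt.2 hts.le)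
      rw [Set.indicator_of_notMem hnt, Matrix.mulVec_zero] at heq
      have hfun : (fun θ => 𝒦 t θ *ᵥ ((Ioo ((s:ℝ)) T).indicator
            (fun _ => (Pi.single j 1 : Fin d → ℝ)) θ))
          = (Ioo ((s:ℝ)) T).indicator (fun θ => 𝒦 t θ *ᵥ (Pi.single j 1)) := by
        funext θ
        by_cases hθ : θ ∈ Ioo ((s:ℝ)) T <;>
          simp [Set.indicator_of_mem, Set.indicator_of_notMem, hθ, Matrix.mulVec_zero]
      rw [hfun, setIntegral_indicator measurableSet_Ioo, Set.Ioo_inter_Ioo, zero_add] at heq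
      simpa [sup_eq_right.mpr (ht.1.trans hts).le] using heq
    -- left part: ∫ over Ioo 0 t vanishes
    have hA : ∫ θ in Ioo (0:ℝ) t, 𝒦 t θ *ᵥ (Pi.single j 1) = 0 := by
      have hqex : ∀ n : ℕ, ∃ s : ℚ, max 0 (t - 1/(n+1)) < (s:ℝ) ∧ (s:ℝ) < t :=
        fun n => exists_rat_btwn (max_lt ht.1 (sub_lt_self t (by positivity)))
      choose q hq1 hq2 using hqex
      have hq0 : ∀ n, 0 < (q n : ℝ) := fun n => (le_max_left _ _).trans_lt (hq1 n)
      have htend : Tendsto (fun n => (q n : ℝ)) atTop (𝓝 t) := by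
        have hlo : Tendsto (fun n : ℕ => t - 1/(n+1)) atTop (𝓝 t) := by
          simpa using (tendsto_const_nhds (x := t)).sub tendsto_one_div_add_atTop_nhds_zero_nat
        exact tendsto_of_tendsto_of_tendsto_of_le_of_le hlo tendsto_const_nhds
          (fun n => ((le_max_right _ _).trans_lt (hq1 n)).le) (fun n => (hq2 n).le)
      have hlim := tendsto_integral_of_dominated_convergence
        (F := fun n => (Ioo (0:ℝ) ((q n):ℝ)).indicator (fun θ => 𝒦 t θ *ᵥ (Pi.single j 1)))
        (f := (Ioo (0:ℝ) t).indicator (fun θ => 𝒦 t θ *ᵥ (Pi.single j 1)))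
        (μ := volume.restrict (Ioo 0 T))
        (bound := fun θ => ‖𝒦 t θ *ᵥ (Pi.single j 1 : Fin d → ℝ)‖)
        (fun n => ((hv j).aestronglyMeasurable).indicator measurableSet_Ioo)
        ((hv j).norm)
        (fun n => ae_of_all _ fun θ => norm_indicator_le_norm_self _ _)
        (ae_of_all _ fun θ => by
          by_cases hθ : θ ∈ Ioo (0:ℝ) t
          · rw [Set.indicator_of_mem hθ]
            have hev : ∀ᶠ n in atTop, θ ∈ Ioo (0:ℝ) ((q n):ℝ) := by
              filter_upwards [htend.eventually_const_lt hθ.2] with n hn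
              exact ⟨hθ.1, hn⟩
            refine Tendsto.congr' ?_ tendsto_const_nhds
            filter_upwards [hev] with n hn
            exact (Set.indicator_of_mem hn (fun θ => 𝒦 t θ *ᵥ (Pi.single j 1 : Fin d → ℝ))).symm
          · rw [Set.indicator_of_notMem hθ]
            have hz : ∀ n, (Ioo (0:ℝ) ((q n):ℝ)).indicator
                (fun θ => 𝒦 t θ *ᵥ (Pi.single j 1 : Fin d → ℝ)) θ = 0 := fun n =>
              Set.indicator_of_notMem
                (fun hmem => hθ ⟨hmem.1, hmem.2.trans (hq2 n)⟩) _
            simp only [hz]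
            exact tendsto_const_nhds)
      have hFn : ∀ n, ∫ θ in Ioo (0:ℝ) T, (Ioo (0:ℝ) ((q n):ℝ)).indicator
          (fun θ => 𝒦 t θ *ᵥ (Pi.single j 1 : Fin d → ℝ)) θ = 0 := by
        intro n
        rw [setIntegral_indicator measurableSet_Ioo, Set.Ioo_inter_Ioo]
        have : (0:ℝ) ⊔ 0 = 0 := sup_idem 0
        rw [this, inf_eq_right.mpr ((hq2 n).trans ht.2).le]
        exact hIL (q n) (hq0 n) (hq2 n)
      have h0 : Tendsto (fun _ : ℕ => (0 : Fin ℓ' → ℝ)) atTop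
          (𝓝 (∫ θ in Ioo (0:ℝ) T, (Ioo (0:ℝ) t).indicator
            (fun θ => 𝒦 t θ *ᵥ (Pi.single j 1 : Fin d → ℝ)) θ)) := by
        refine hlim.congr fun n => ?_
        exact hFn n
      have := tendsto_nhds_unique h0 tendsto_const_nhds
      rw [setIntegral_indicator measurableSet_Ioo, Set.Ioo_inter_Ioo] at this
      have h00 : (0:ℝ) ⊔ 0 = 0 := sup_idem 0
      rw [h00, inf_eq_right.mpr ht.2.le] at this
      exact this
    -- right part: ∫ over Ioo t T vanishes
    have hB : ∫ θ in Ioo t T, 𝒦 t θ *ᵥ (Pi.single j 1) = 0 := by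
      have hqex : ∀ n : ℕ, ∃ s : ℚ, t < (s:ℝ) ∧ (s:ℝ) < min (t + 1/(n+1)) T :=
        fun n => exists_rat_btwn (lt_min (lt_add_of_pos_right t (by positivity)) ht.2)
      choose q hq1 hq2 using hqex
      have hqT : ∀ n, (q n : ℝ) < T := fun n => (hq2 n).trans_le (min_le_right _ _)
      have htend : Tendsto (fun n => (q n : ℝ)) atTop (𝓝 t) := by
        have hhi : Tendsto (fun n : ℕ => t + 1/(n+1)) atTop (𝓝 t) := by
          simpa using (tendsto_const_nhds (x := t)).add tendsto_one_div_add_atTop_nhds_zero_nat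
        exact tendsto_of_tendsto_of_tendsto_of_le_of_le tendsto_const_nhds hhi
          (fun n => (hq1 n).le)
          (fun n => ((hq2 n).trans_le (min_le_left _ _)).le)
      have hlim := tendsto_integral_of_dominated_convergence
        (F := fun n => (Ioo ((q n):ℝ) T).indicator (fun θ => 𝒦 t θ *ᵥ (Pi.single j 1)))
        (f := (Ioo t T).indicator (fun θ => 𝒦 t θ *ᵥ (Pi.single j 1)))
        (μ := volume.restrict (Ioo 0 T))
        (bound := fun θ => ‖𝒦 t θ *ᵥ (Pi.single j 1 : Fin d → ℝ)‖)
        (fun n => ((hv j).aestronglyMeasurable).indicator measurableSet_Ioo)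
        ((hv j).norm)
        (fun n => ae_of_all _ fun θ => norm_indicator_le_norm_self _ _)
        (ae_of_all _ fun θ => by
          by_cases hθ : θ ∈ Ioo t T
          · rw [Set.indicator_of_mem hθ]
            have hev : ∀ᶠ n in atTop, θ ∈ Ioo ((q n):ℝ) T := by
              filter_upwards [htend.eventually_lt_const hθ.1] with n hn
              exact ⟨hn, hθ.2⟩
            refine Tendsto.congr' ?_ tendsto_const_nhds
            filter_upwards [hev] with n hn
            exact (Set.indicator_of_mem hn (fun θ => 𝒦 t θ *ᵥ (Pi.single j 1 : Fin d → ℝ))).symm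
          · rw [Set.indicator_of_notMem hθ]
            have hz : ∀ n, (Ioo ((q n):ℝ) T).indicator
                (fun θ => 𝒦 t θ *ᵥ (Pi.single j 1 : Fin d → ℝ)) θ = 0 := fun n =>
              Set.indicator_of_notMem
                (fun hmem => hθ ⟨(hq1 n).trans hmem.1, hmem.2⟩) _
            simp only [hz]
            exact tendsto_const_nhds)
      have hFn : ∀ n, ∫ θ in Ioo (0:ℝ) T, (Ioo ((q n):ℝ) T).indicator
          (fun θ => 𝒦 t θ *ᵥ (Pi.single j 1 : Fin d → ℝ)) θ = 0 := by
        intro n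
        rw [setIntegral_indicator measurableSet_Ioo, Set.Ioo_inter_Ioo]
        rw [sup_eq_right.mpr (ht.1.trans (hq1 n)).le, inf_idem]
        exact hIR (q n) (hq1 n) (hqT n)
      have h0 : Tendsto (fun _ : ℕ => (0 : Fin ℓ' → ℝ)) atTop
          (𝓝 (∫ θ in Ioo (0:ℝ) T, (Ioo t T).indicator
            (fun θ => 𝒦 t θ *ᵥ (Pi.single j 1 : Fin d → ℝ)) θ)) := by
        refine hlim.congr fun n => ?_
        exact hFn n
      have := tendsto_nhds_unique h0 tendsto_const_nhds
      rw [setIntegral_indicator measurableSet_Ioo, Set.Ioo_inter_Ioo] at this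
      rw [sup_eq_right.mpr ht.1.le, inf_idem] at this
      exact this
    -- combine
    have hsplit : ∫ θ in Ioo (0:ℝ) T, 𝒦 t θ *ᵥ (Pi.single j 1) = 0 := by
      have hdisj : Disjoint (Ioo (0:ℝ) t) (Ico t T) :=
        Set.disjoint_left.2 fun x hx hx' => absurd hx.2 (not_lt.2 hx'.1)
      have hunion : Ioo (0:ℝ) t ∪ Ico t T = Ioo 0 T :=
        Set.Ioo_union_Ico_eq_Ioo ht.1 ht.2.le
      rw [← hunion, setIntegral_union hdisj measurableSet_Ico
        ((hv j).mono_set (hunion ▸ Set.subset_union_left))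
        ((hv j).mono_set (hunion ▸ Set.subset_union_right)),
        MeasureTheory.integral_Ico_eq_integral_Ioo, hA, hB, add_zero]
    have hj := h1 j
    rw [hsplit, add_zero] at hj
    exact hj
  ext i j
  have hcol := congrFun (key j) i
  simpa [Matrix.mulVec_single] using hcol
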